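/- arXiv:2109.10846 — 3 statements merged into one kernel-verified Lean document; each statement's English description precedes it below -/
import Mathlib

section
/- Let T be a bounded operator on a complex separable Hilbert space with the wandering subspace property, and let P_w be the orthogonal projection of H onto ker(T* − w̄). Then a complex number w is a bounded point evaluation for T if and only if the restriction P_w|_{ker T*} : ker T* → ker(T* − w̄) is invertible (bijective with bounded inverse). -/
open ContinuousLinearMap Submodule Filter

noncomputable section

variable {H : Type*} [NormedAddCommGroup H] [InnerProductSpace ℂ H] [CompleteSpace H]

/-- The wandering subspace `ker T*`. -/
def kerAdj (T : H →L[ℂ] H) : Submodule ℂ H := LinearMap.ker ((ContinuousLinearMap.adjoint T : H →L[ℂ] H) : H →ₗ[ℂ] H)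

/-- `T` has the wandering subspace property: the closed linear span of
`⋃ₙ Tⁿ(ker T*)` is all of `H`. -/
def WSP (T : H →L[ℂ] H) : Prop :=
  (⨆ n : ℕ, (kerAdj T).map ((T ^ n : H →L[ℂ] H) : H →ₗ[ℂ] H)).topologicalClosure = ⊤

/-- `w` is a bounded point evaluation for `T`: `‖p(w)‖ ≤ c ‖p(T)‖` for all
`ker T*`-valued polynomials `p`, where `p(T) = Σ Tⁿ xₙ` for `p(z) = Σ xₙ zⁿ`. -/
def IsBPE (T : H →L[ℂ] H) (w : ℂ) : Prop :=
  ∃ c > (0 : ℝ), ∀ (k : ℕ) (x : ℕ → H), (∀ n, x n ∈ kerAdj T) →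
    ‖∑ n ∈ Finset.range (k + 1), w ^ n • x n‖ ≤
      c * ‖∑ n ∈ Finset.range (k + 1), (T ^ n) (x n)‖

/-- `E` is the (continuous extension of the) evaluation operator at `w`:
it takes values in `ker T*` and sends `p(T)` to `p(w)`. -/
def IsEval (T : H →L[ℂ] H) (w : ℂ) (E : H →L[ℂ] H) : Prop :=
  (∀ y, E y ∈ kerAdj T) ∧
    ∀ (k : ℕ) (x : ℕ → H), (∀ n, x n ∈ kerAdj T) →
      E (∑ n ∈ Finset.range (k + 1), (T ^ n) (x n)) =
        ∑ n ∈ Finset.range (k + 1), w ^ n • x n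

local notation "⟪" x ", " y "⟫" => @inner ℂ _ _ x y

/-- The adjoint of `T - w•1`. -/
lemma adjoint_sub_smul_one (T : H →L[ℂ] H) (w : ℂ) :
    ContinuousLinearMap.adjoint (T - w • (1 : H →L[ℂ] H)) =
      ContinuousLinearMap.adjoint T - (starRingEnd ℂ w) • 1 := by
  have h1 : (1 : H →L[ℂ] H) = ContinuousLinearMap.id ℂ H := rfl
  rw [map_sub, map_smulₛₗ, h1, ContinuousLinearMap.adjoint_id]

lemma inner_pow_apply (T : H →L[ℂ] H) (w : ℂ) {y : H}
    (hy' : ContinuousLinearMap.adjoint T y = (starRingEnd ℂ w) • y) (x : H) (n : ℕ) :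
    ⟪y, (T ^ n) x⟫ = w ^ n * ⟪y, x⟫ := by
  induction n with
  | zero => simp
  | succ n ih =>
    have h1 : (T ^ (n + 1)) x = T ((T ^ n) x) := by rw [pow_succ']; rfl
    rw [h1, ← ContinuousLinearMap.adjoint_inner_left, hy', inner_smul_left,
      Complex.conj_conj, ih, pow_succ]
    ring

lemma adjoint_apply_of_mem (T : H →L[ℂ] H) (w : ℂ) {K : Submodule ℂ H}
    (hK : K = LinearMap.ker ((ContinuousLinearMap.adjoint T -
      (starRingEnd ℂ w) • (1 : H →L[ℂ] H) : H →L[ℂ] H) : H →ₗ[ℂ] H)) {y : H} (hy : y ∈ K) :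
    ContinuousLinearMap.adjoint T y = (starRingEnd ℂ w) • y := by
  rw [hK, LinearMap.mem_ker] at hy
  have h2 : ContinuousLinearMap.adjoint T y - (starRingEnd ℂ w) • y = 0 := by
    simpa using hy
  linear_combination (norm := module) h2

/-- Key identity: a polynomial in `T` and its value at `w` have the same
inner product against elements of `K = ker (T* - w̄)`. -/
lemma inner_poly_eq (T : H →L[ℂ] H) (w : ℂ) {K : Submodule ℂ H}
    (hK : K = LinearMap.ker ((ContinuousLinearMap.adjoint T -
      (starRingEnd ℂ w) • (1 : H →L[ℂ] H) : H →L[ℂ] H) : H →ₗ[ℂ] H)) {y : H} (hy : y ∈ K)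
    (s : Finset ℕ) (x : ℕ → H) :
    ⟪y, ∑ n ∈ s, (T ^ n) (x n)⟫ = ⟪y, ∑ n ∈ s, w ^ n • x n⟫ := by
  rw [inner_sum, inner_sum]
  refine Finset.sum_congr rfl fun n _ => ?_
  rw [inner_pow_apply T w (adjoint_apply_of_mem T w hK hy), inner_smul_right]

lemma poly_diff_mem_orthogonal (T : H →L[ℂ] H) (w : ℂ) {K : Submodule ℂ H}
    (hK : K = LinearMap.ker ((ContinuousLinearMap.adjoint T -
      (starRingEnd ℂ w) • (1 : H →L[ℂ] H) : H →L[ℂ] H) : H →ₗ[ℂ] H)) (s : Finset ℕ) (x : ℕ → H) :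
    (∑ n ∈ s, (T ^ n) (x n)) - (∑ n ∈ s, w ^ n • x n) ∈ Kᗮ := by
  rw [Submodule.mem_orthogonal]
  intro y hy
  rw [inner_sub_right, sub_eq_zero]
  exact inner_poly_eq T w hK hy s x

section Projection

variable {K : Submodule ℂ H} {P : H →L[ℂ] H}

lemma P_zero_of_orth (hP : ∀ x : H, P x ∈ K ∧ x - P x ∈ Kᗮ) {v : H} (hv : v ∈ Kᗮ) :
    P v = 0 := by
  have h2 : P v ∈ Kᗮ := by
    have hrw : P v = v - (v - P v) := by abel
    rw [hrw]
    exact Submodule.sub_mem _ hv (hP v).2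
  exact inner_self_eq_zero.mp ((Submodule.mem_orthogonal K _).mp h2 _ (hP v).1)

lemma P_eq_of_mem (hP : ∀ x : H, P x ∈ K ∧ x - P x ∈ Kᗮ) {v : H} (hv : v ∈ K) :
    P v = v := by
  have h1 : v - P v ∈ K := Submodule.sub_mem _ hv (hP v).1
  have h2 := (hP v).2
  have h3 : ⟪v - P v, v - P v⟫ = 0 := (Submodule.mem_orthogonal K _).mp h2 _ h1
  have := inner_self_eq_zero.mp h3
  rw [sub_eq_zero] at this
  exact this.symm

lemma norm_P_apply_le (hP : ∀ x : H, P x ∈ K ∧ x - P x ∈ Kᗮ) (z : H) : ‖P z‖ ≤ ‖z‖ := by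
  have horth : ⟪P z, z - P z⟫ = 0 :=
    (Submodule.mem_orthogonal K _).mp (hP z).2 _ (hP z).1
  have hz : z = P z + (z - P z) := by abel
  have hsq : ‖z‖ * ‖z‖ = ‖P z‖ * ‖P z‖ + ‖z - P z‖ * ‖z - P z‖ := by
    conv_lhs => rw [hz]
    exact norm_add_sq_eq_norm_sq_add_norm_sq_of_inner_eq_zero _ _ horth
  nlinarith [norm_nonneg (P z), norm_nonneg z, norm_nonneg (z - P z)]

end Projection

/-- Every element of the span of the `Tⁿ(ker T*)` is a polynomial in `T` with
coefficients in `ker T*`. -/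
lemma mem_iSup_rep (T : H →L[ℂ] H) {v : H}
    (hv : v ∈ ⨆ n : ℕ, (kerAdj T).map ((T ^ n : H →L[ℂ] H) : H →ₗ[ℂ] H)) :
    ∃ (k : ℕ) (x : ℕ → H), (∀ n, x n ∈ kerAdj T) ∧ (∀ n, k < n → x n = 0) ∧
      v = ∑ n ∈ Finset.range (k + 1), (T ^ n) (x n) := by
  refine Submodule.iSup_induction (motive := fun v => ∃ (k : ℕ) (x : ℕ → H),
    (∀ n, x n ∈ kerAdj T) ∧ (∀ n, k < n → x n = 0) ∧
      v = ∑ n ∈ Finset.range (k + 1), (T ^ n) (x n)) _ hv ?_ ?_ ?_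
  · rintro i u hu
    rw [Submodule.mem_map] at hu
    obtain ⟨z, hz, rfl⟩ := hu
    refine ⟨i, fun n => if n = i then z else 0, fun n => ?_, fun n hn => ?_, ?_⟩
    · by_cases h : n = i <;> simp [h, hz, Submodule.zero_mem]
    · have : n ≠ i := by omega
      simp [this]
    · have h1 : ∀ n ∈ Finset.range (i + 1),
          (T ^ n) (if n = i then z else 0) = if n = i then (T ^ n) z else 0 := by
        intro n _
        by_cases h : n = i <;> simp [h]
      rw [Finset.sum_congr rfl h1, Finset.sum_ite_eq' (Finset.range (i + 1)) i
        (fun n => (T ^ n) z)]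
      simp [Module.End.pow_apply]
  · exact ⟨0, 0, fun n => Submodule.zero_mem _, fun n _ => rfl, by simp⟩
  · rintro u₁ u₂ ⟨k₁, x₁, hx₁, hv₁, rfl⟩ ⟨k₂, x₂, hx₂, hv₂, rfl⟩
    refine ⟨max k₁ k₂, x₁ + x₂, fun n => Submodule.add_mem _ (hx₁ n) (hx₂ n),
      fun n hn => ?_, ?_⟩
    · have e1 : x₁ n = 0 := hv₁ n (lt_of_le_of_lt (le_max_left _ _) hn)
      have e2 : x₂ n = 0 := hv₂ n (lt_of_le_of_lt (le_max_right _ _) hn)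
      simp [Pi.add_apply, e1, e2]
    · have key : ∀ (k : ℕ) (x : ℕ → H), (∀ n, k < n → x n = 0) → k ≤ max k₁ k₂ →
          ∑ n ∈ Finset.range (max k₁ k₂ + 1), (T ^ n) (x n)
            = ∑ n ∈ Finset.range (k + 1), (T ^ n) (x n) := by
        intro k x hx hk
        refine (Finset.sum_subset ?_ ?_).symm
        · exact Finset.range_subset_range.mpr (by omega)
        · intro n _ hn
          rw [Finset.mem_range, not_lt] at hn
          rw [hx n (by omega), map_zero]
      have h1 := key k₁ x₁ hv₁ (le_max_left _ _)
      have h2 := key k₂ x₂ hv₂ (le_max_right _ _)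
      simp only [Pi.add_apply, map_add, Finset.sum_add_distrib, h1, h2]

/-- `w` is a bounded point evaluation iff the restriction
`P_w|_{ker T*} : ker T* → ker(T* - w̄)` is invertible (surjective with bounded inverse,
hence bijective). -/
theorem stmt_9 [TopologicalSpace.SeparableSpace H] (T : H →L[ℂ] H) (hT : WSP T)
    (w : ℂ) (K : Submodule ℂ H)
    (hK : K = LinearMap.ker ((ContinuousLinearMap.adjoint T - (starRingEnd ℂ w) • (1 : H →L[ℂ] H) : H →L[ℂ] H) : H →ₗ[ℂ] H))
    (P : H →L[ℂ] H) (hP : ∀ x : H, P x ∈ K ∧ x - P x ∈ Kᗮ) :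
    IsBPE T w ↔
      ((∀ y ∈ K, ∃ x ∈ kerAdj T, P x = y) ∧
        ∃ c > (0 : ℝ), ∀ x ∈ kerAdj T, ‖x‖ ≤ c * ‖P x‖) := by
  constructor
  · rintro ⟨c, hc0, hc⟩
    -- First: the lower bound  ‖x‖ ≤ c‖Px‖  for x in ker T*.
    have hlow : ∀ x ∈ kerAdj T, ‖x‖ ≤ c * ‖P x‖ := by
      intro x hx
      set S : H →L[ℂ] H := T - w • (1 : H →L[ℂ] H) with hS
      -- x - Px ∈ Kᗮ = closure (range S) ⊆ closure (S '' (⨆ₙ Tⁿ(ker T*)))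
      have hKer : K = LinearMap.ker ((ContinuousLinearMap.adjoint S : H →L[ℂ] H) : H →ₗ[ℂ] H) := by
        rw [hK, adjoint_sub_smul_one]
      have hrange : K = (LinearMap.range (S : H →ₗ[ℂ] H))ᗮ := by
        rw [hKer]
        ext y
        simp only [LinearMap.mem_ker, Submodule.mem_orthogonal]
        constructor
        · rintro h u ⟨z, rfl⟩
          show ⟪S z, y⟫ = 0
          rw [← ContinuousLinearMap.adjoint_inner_right, (by simpa using h : ContinuousLinearMap.adjoint S y = 0), inner_zero_right]
        · intro h
          have h2 : ∀ z : H, ⟪ContinuousLinearMap.adjoint S y,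
              z⟫ = 0 := by
            intro z
            rw [ContinuousLinearMap.adjoint_inner_left]
            rw [← inner_conj_symm]
            rw [h (S z) ⟨z, rfl⟩]
            simp
          exact inner_self_eq_zero.mp (h2 (ContinuousLinearMap.adjoint S y))
      have hKorth : Kᗮ = (LinearMap.range (S : H →ₗ[ℂ] H)).topologicalClosure := by
        rw [hrange, Submodule.orthogonal_orthogonal_eq_closure]
      have hmem : x - P x ∈ closure ((LinearMap.range (S : H →ₗ[ℂ] H) : Set H)) := by
        have := (hP x).2
        rw [hKorth] at this
        exact this
      -- density step
      have hdense : closure ((LinearMap.range (S : H →ₗ[ℂ] H) : Set H)) ⊆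
          closure (S '' ((⨆ n : ℕ, (kerAdj T).map ((T ^ n : H →L[ℂ] H) : H →ₗ[ℂ] H) : Submodule ℂ H) : Set H)) := by
        have h1 : (LinearMap.range (S : H →ₗ[ℂ] H) : Set H) ⊆
            closure (S '' ((⨆ n : ℕ, (kerAdj T).map ((T ^ n : H →L[ℂ] H) : H →ₗ[ℂ] H) : Submodule ℂ H) : Set H)) := by
          rintro u ⟨z, rfl⟩
          have hz : z ∈ closure ((⨆ n : ℕ, (kerAdj T).map ((T ^ n : H →L[ℂ] H) : H →ₗ[ℂ] H) : Submodule ℂ H) : Set H) := by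
            have : ((⨆ n : ℕ, (kerAdj T).map ((T ^ n : H →L[ℂ] H) : H →ₗ[ℂ] H)).topologicalClosure : Set H) = Set.univ := by
              rw [hT]; rfl
            rw [Submodule.topologicalClosure_coe] at this
            rw [this]; trivial
          exact image_closure_subset_closure_image S.continuous ⟨z, hz, rfl⟩
        calc closure ((LinearMap.range (S : H →ₗ[ℂ] H) : Set H))
            ⊆ closure (closure (S '' _)) := closure_mono h1
          _ = _ := closure_closure
      have hmem2 := hdense hmem
      -- approximate to within ε
      refine le_of_forall_pos_le_add fun ε hε => ?_
      rw [Metric.mem_closure_iff] at hmem2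
      obtain ⟨b, hb, hdist⟩ := hmem2 (ε / c) (by positivity)
      obtain ⟨v, hv, rfl⟩ := hb
      obtain ⟨k, xf, hxf, hvan, rfl⟩ := mem_iSup_rep T hv
      set vv : H := ∑ n ∈ Finset.range (k + 1), (T ^ n) (xf n) with hvv
      -- build the polynomial y with y(T) = x - S vv and y(w) = x
      set y : ℕ → H := fun n =>
        (if n = 0 then x else 0) + w • xf n - (if n = 0 then 0 else xf (n - 1)) with hy
      have hymem : ∀ n, y n ∈ kerAdj T := by
        intro n
        refine Submodule.sub_mem _ (Submodule.add_mem _ ?_ (Submodule.smul_mem _ _ (hxf n))) ?_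
        · by_cases h : n = 0 <;> simp [h, hx, Submodule.zero_mem]
        · by_cases h : n = 0 <;> simp [h, hxf, Submodule.zero_mem]
      have hsum1 : ∀ (f : ℕ → H), (f 0 = x) → (∀ n, n ≠ 0 → f n = 0) →
          ∑ n ∈ Finset.range (k + 2), f n = x := by
        intro f hf0 hfn
        rw [Finset.sum_eq_single 0 (fun n _ hn => hfn n hn) (by simp)]
        exact hf0
      -- y(T) = x + w•vv - T vv
      have hyT : ∑ n ∈ Finset.range (k + 2), (T ^ n) (y n) = x + w • vv - T vv := by
        have expand : ∀ n, (T ^ n) (y n) =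
            ((if n = 0 then x else 0) + w • (T ^ n) (xf n))
              - (if n = 0 then 0 else (T ^ n) (xf (n - 1))) := by
          intro n
          rw [hy]
          by_cases h : n = 0 <;> simp [h, map_add, map_sub, map_smul]
        rw [Finset.sum_congr rfl fun n _ => expand n, Finset.sum_sub_distrib,
          Finset.sum_add_distrib, ← Finset.smul_sum]
        have e1 : ∑ n ∈ Finset.range (k + 2), (if n = 0 then x else (0 : H)) = x :=
          hsum1 _ (by simp) (fun n hn => by simp [hn])
        have e2 : ∑ n ∈ Finset.range (k + 2), (T ^ n) (xf n) = vv := by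
          rw [Finset.sum_range_succ, hvan (k + 1) (by omega)]
          simp [hvv]
        have e3 : ∑ n ∈ Finset.range (k + 2), (if n = 0 then 0 else (T ^ n) (xf (n - 1)))
            = T vv := by
          rw [Finset.sum_range_succ']
          simp only [Nat.succ_ne_zero, if_false, if_true, Nat.add_sub_cancel]
          have : ∀ i ∈ Finset.range (k + 1), (T ^ (i + 1)) (xf i) = T ((T ^ i) (xf i)) := by
            intro i _
            rw [pow_succ']; rfl
          rw [Finset.sum_congr rfl this, ← map_sum]
          simp [hvv]
        rw [e1, e2, e3]
      -- y(w) = x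
      have hyw : ∑ n ∈ Finset.range (k + 2), w ^ n • y n = x := by
        have expand : ∀ n, w ^ n • y n =
            ((if n = 0 then x else 0) + w ^ (n + 1) • xf n)
              - (if n = 0 then 0 else w ^ n • xf (n - 1)) := by
          intro n
          rw [hy]
          by_cases h : n = 0
          · simp [h]
          · simp [h, smul_sub, smul_smul, ← pow_succ]
        rw [Finset.sum_congr rfl fun n _ => expand n, Finset.sum_sub_distrib,
          Finset.sum_add_distrib]
        have e1 : ∑ n ∈ Finset.range (k + 2), (if n = 0 then x else (0 : H)) = x :=
          hsum1 _ (by simp) (fun n hn => by simp [hn])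
        have e2 : ∑ n ∈ Finset.range (k + 2), w ^ (n + 1) • xf n
            = ∑ n ∈ Finset.range (k + 2), (if n = 0 then 0 else w ^ n • xf (n - 1)) := by
          conv_rhs => rw [Finset.sum_range_succ']
          rw [Finset.sum_range_succ, hvan (k + 1) (by omega), smul_zero, add_zero]
          simp
        rw [e1, e2]
        abel
      -- apply BPE
      have hbpe := hc (k + 1) y hymem
      rw [hyw, hyT] at hbpe
      have hSv : S vv = T vv - w • vv := by
        rw [hS]; simp [ContinuousLinearMap.sub_apply]
      have hrw : x + w • vv - T vv = P x + ((x - P x) - S vv) := by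
        rw [hSv]; abel
      have hnorm : ‖x + w • vv - T vv‖ ≤ ‖P x‖ + ε / c := by
        rw [hrw]
        calc ‖P x + ((x - P x) - S vv)‖ ≤ ‖P x‖ + ‖(x - P x) - S vv‖ := norm_add_le _ _
          _ ≤ ‖P x‖ + ε / c := by
              have : ‖(x - P x) - S vv‖ = dist (x - P x) (S vv) := by
                rw [dist_eq_norm]
              rw [this]
              exact (add_le_add_iff_left _).mpr (le_of_lt hdist)
      calc ‖x‖ ≤ c * ‖x + w • vv - T vv‖ := hbpe
        _ ≤ c * (‖P x‖ + ε / c) := by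
            exact mul_le_mul_of_nonneg_left hnorm (le_of_lt hc0)
        _ = c * ‖P x‖ + ε := by
            rw [mul_add, mul_div_cancel₀ _ (ne_of_gt hc0)]
    refine ⟨?_, c, hc0, hlow⟩
    -- surjectivity
    intro y hy
    -- M = P(ker T*) is a closed submodule of K
    set M : Submodule ℂ H := (kerAdj T).map (P : H →ₗ[ℂ] H) with hM
    have hMK : M ≤ K := by
      rintro m ⟨z, hz, rfl⟩
      exact (hP z).1
    have hclosed : IsClosed (M : Set H) := by
      set f : (kerAdj T) →L[ℂ] H := P.comp (kerAdj T).subtypeL with hf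
      have hanti : AntilipschitzWith (⟨c, le_of_lt hc0⟩ : NNReal) f := by
        apply ContinuousLinearMap.antilipschitz_of_bound
        intro z
        exact hlow z z.2
      haveI hcs : CompleteSpace (kerAdj T) := by
        have h1 : IsClosed ((kerAdj T : Set H)) :=
          ContinuousLinearMap.isClosed_ker (ContinuousLinearMap.adjoint T)
        exact h1.completeSpace_coe
      have hr : IsClosed (Set.range f) := hanti.isClosed_range f.uniformContinuous
      have heq : Set.range f = (M : Set H) := by
        ext m
        constructor
        · rintro ⟨z, rfl⟩; exact ⟨z, z.2, rfl⟩
        · rintro ⟨z, hz, rfl⟩; exact ⟨⟨z, hz⟩, rfl⟩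
      rwa [heq] at hr
    haveI : CompleteSpace M := hclosed.completeSpace_coe
    obtain ⟨a, ha, b, hb, hyab⟩ := M.exists_add_mem_mem_orthogonal y
    have hbK : b ∈ K := by
      have hby : b = y - a := by rw [hyab]; abel
      rw [hby]; exact K.sub_mem hy (hMK ha)
    have hborth : b ∈ (⨆ n : ℕ, (kerAdj T).map ((T ^ n : H →L[ℂ] H) : H →ₗ[ℂ] H))ᗮ := by
      rw [Submodule.mem_orthogonal]
      intro u hu
      obtain ⟨k, xf, hxf, hvan, rfl⟩ := mem_iSup_rep T hu
      have h1 : ∀ n, ⟪b, xf n⟫ = 0 := by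
        intro n
        have hP0 : ⟪b, P (xf n)⟫ = 0 := by
          rw [← inner_conj_symm,
            (Submodule.mem_orthogonal M b).mp hb (P (xf n)) ⟨xf n, hxf n, rfl⟩]
          simp
        have hP1 : ⟪b, xf n - P (xf n)⟫ = 0 :=
          (Submodule.mem_orthogonal K _).mp (hP (xf n)).2 b hbK
        have hdecomp : xf n = P (xf n) + (xf n - P (xf n)) := by abel
        rw [hdecomp, inner_add_right, hP0, hP1, add_zero]
      rw [← inner_conj_symm]
      have hb0 : ⟪b, ∑ n ∈ Finset.range (k + 1), (T ^ n) (xf n)⟫ = 0 := by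
        rw [inner_poly_eq T w hK hbK, inner_sum]
        refine Finset.sum_eq_zero fun n _ => ?_
        rw [inner_smul_right, h1 n, mul_zero]
      rw [hb0]
      simp
    have hbot : (⨆ n : ℕ, (kerAdj T).map ((T ^ n : H →L[ℂ] H) : H →ₗ[ℂ] H))ᗮ = ⊥ :=
      (Submodule.topologicalClosure_eq_top_iff).mp hT
    rw [hbot, Submodule.mem_bot] at hborth
    rw [hborth, add_zero] at hyab
    obtain ⟨z, hz, hz2⟩ := ha
    exact ⟨z, hz, by rw [hyab]; exact hz2⟩
  · rintro ⟨hsurj, c, hc0, hlow⟩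
    refine ⟨c, hc0, fun k x hx => ?_⟩
    set pw : H := ∑ n ∈ Finset.range (k + 1), w ^ n • x n with hpw
    set pT : H := ∑ n ∈ Finset.range (k + 1), (T ^ n) (x n) with hpT
    have hpwmem : pw ∈ kerAdj T :=
      Submodule.sum_mem _ fun n _ => Submodule.smul_mem _ _ (hx n)
    have hPP : P pT = P pw := by
      have hdiff : pT - pw ∈ Kᗮ := poly_diff_mem_orthogonal T w hK _ x
      have := P_zero_of_orth hP hdiff
      rw [map_sub, sub_eq_zero] at this
      exact this
    calc ‖pw‖ ≤ c * ‖P pw‖ := hlow pw hpwmem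
      _ = c * ‖P pT‖ := by rw [hPP]
      _ ≤ c * ‖pT‖ := mul_le_mul_of_nonneg_left (norm_P_apply_le hP pT) (le_of_lt hc0)
end
end

section
/- Let T be a left-invertible analytic operator on a complex separable Hilbert space with the wandering subspace property, and T' its Cauchy dual. Then the closed span of ⋃_{w ∈ D(0, r(T')^{-1})} ker(T* − w̄) equals H. -/
open ContinuousLinearMap Submodule Filter

noncomputable section

variable {H : Type*} [NormedAddCommGroup H] [InnerProductSpace ℂ H] [CompleteSpace H]

/-- If `v` is orthogonal to `ker T*` then `v = T (T'* v)` where `T' = T ∘ A`. -/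
lemma aux_step (T A : H →L[ℂ] H)
    (hA2 : (ContinuousLinearMap.adjoint T ∘L T) ∘L A = 1)
    (v : H) (hv : ∀ x ∈ kerAdj T, inner (𝕜 := ℂ) x v = 0) :
    v = T ((ContinuousLinearMap.adjoint (T ∘L A)) v) := by
  set T' : H →L[ℂ] H := T ∘L A with hT'
  have hTT' : ContinuousLinearMap.adjoint T ∘L T' = 1 := by
    rw [hT', ← ContinuousLinearMap.comp_assoc, hA2]
  set d := v - T ((ContinuousLinearMap.adjoint T') v) with hd
  have key : ∀ z : H, inner (𝕜 := ℂ) d z = 0 := by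
    intro z
    have hker : z - T' ((ContinuousLinearMap.adjoint T) z) ∈ kerAdj T := by
      have : (ContinuousLinearMap.adjoint T) (T' ((ContinuousLinearMap.adjoint T) z))
          = (ContinuousLinearMap.adjoint T) z := by
        have := congrArg (fun B : H →L[ℂ] H => B ((ContinuousLinearMap.adjoint T) z)) hTT'
        simpa using this
      simp [kerAdj, LinearMap.mem_ker, map_sub, this]
    have h1 : inner (𝕜 := ℂ) (T ((ContinuousLinearMap.adjoint T') v)) z
        = inner (𝕜 := ℂ) v (T' ((ContinuousLinearMap.adjoint T) z)) := by
      rw [← ContinuousLinearMap.adjoint_inner_right T]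
      rw [ContinuousLinearMap.adjoint_inner_left T']
    have h2 : inner (𝕜 := ℂ) d z
        = inner (𝕜 := ℂ) v (z - T' ((ContinuousLinearMap.adjoint T) z)) := by
      rw [hd, inner_sub_left, inner_sub_right, h1]
    have h3 := hv _ hker
    -- hv gives inner x v = 0 for x in ker; we need inner v x = 0
    have h4 : inner (𝕜 := ℂ) v (z - T' ((ContinuousLinearMap.adjoint T) z)) = 0 := by
      have := congrArg (starRingEnd ℂ) h3
      simpa [inner_conj_symm] using this
    rw [h2, h4]
  have : d = 0 := by
    have := key d
    rwa [inner_self_eq_zero] at this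
  rw [hd] at this
  exact sub_eq_zero.mp this

/-- for left-invertible analytic `T` with the wandering subspace property,
the closed span of `⋃_{|w| < r(T')⁻¹} ker(T* - w̄)` is `H`. -/
theorem stmt_17 [TopologicalSpace.SeparableSpace H] (T T' A : H →L[ℂ] H) (hT : WSP T)
    (hA1 : A ∘L (ContinuousLinearMap.adjoint T ∘L T) = 1)
    (hA2 : (ContinuousLinearMap.adjoint T ∘L T) ∘L A = 1)
    (hT' : T' = T ∘L A)
    (han : (⨅ n : ℕ, LinearMap.range ((T ^ n : H →L[ℂ] H) : H →ₗ[ℂ] H)) = ⊥) :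
    (⨆ w ∈ {w : ℂ | (‖w‖₊ : ENNReal) < (spectralRadius ℂ T')⁻¹},
      LinearMap.ker ((ContinuousLinearMap.adjoint T -
        (starRingEnd ℂ w) • (1 : H →L[ℂ] H) : H →L[ℂ] H) : H →ₗ[ℂ] H)).topologicalClosure = ⊤ := by
  rcases subsingleton_or_nontrivial H with hH | hH
  · rw [Submodule.eq_top_iff']
    intro x
    have : x = (0 : H) := Subsingleton.elim x 0
    rw [this]
    exact zero_mem _
  rw [Submodule.topologicalClosure_eq_top_iff]
  rw [Submodule.eq_bot_iff]
  intro y hy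
  -- T* ∘ T' = 1
  have hTT' : ContinuousLinearMap.adjoint T ∘L T' = 1 := by
    rw [hT', ← ContinuousLinearMap.comp_assoc, hA2]
  -- step 2: for z small, the resolvent vector is in one of the kernels
  have hmem : ∀ (z : ℂ), (‖z‖₊ : ENNReal) < (spectralRadius ℂ T')⁻¹ → ∀ x ∈ kerAdj T,
      inner (𝕜 := ℂ) y (Ring.inverse (1 - z • T') x) = 0 := by
    intro z hz x hx
    have hunit : IsUnit (1 - z • T') := spectrum.isUnit_one_sub_smul_of_lt_inv_radius hz
    set u := Ring.inverse (1 - z • T') x with hu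
    have h1 : (1 - z • T') u = x := by
      have : ((1 - z • T') * Ring.inverse (1 - z • T')) x = (1 : H →L[ℂ] H) x := by
        rw [Ring.mul_inverse_cancel _ hunit]
      simpa [ContinuousLinearMap.mul_apply] using this
    have h2 : u = x + z • T' u := by
      have : u - z • T' u = x := by
        simpa [ContinuousLinearMap.sub_apply, ContinuousLinearMap.smul_apply] using h1
      rw [← this]; abel
    have hadj : (ContinuousLinearMap.adjoint T) u = z • u := by
      have hx0 : (ContinuousLinearMap.adjoint T) x = 0 := hx
      have hT'u : (ContinuousLinearMap.adjoint T) (T' u) = u := by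
        have := congrArg (fun B : H →L[ℂ] H => B u) hTT'
        simpa using this
      calc (ContinuousLinearMap.adjoint T) u
          = (ContinuousLinearMap.adjoint T) (x + z • T' u) := by rw [← h2]
        _ = (ContinuousLinearMap.adjoint T) x
              + z • (ContinuousLinearMap.adjoint T) (T' u) := by
            rw [map_add, map_smul]
        _ = z • u := by rw [hx0, hT'u, zero_add]
    -- u belongs to the kernel at w = conj z
    have hker : u ∈ LinearMap.ker ((ContinuousLinearMap.adjoint T -
        (starRingEnd ℂ (starRingEnd ℂ z)) • (1 : H →L[ℂ] H) : H →L[ℂ] H) : H →ₗ[ℂ] H) := by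
      rw [LinearMap.mem_ker]
      simp [ContinuousLinearMap.sub_apply, ContinuousLinearMap.smul_apply, hadj]
    have hwmem : (starRingEnd ℂ z) ∈ {w : ℂ | (‖w‖₊ : ENNReal) < (spectralRadius ℂ T')⁻¹} := by
      simpa using hz
    have hu_in : u ∈ (⨆ w ∈ {w : ℂ | (‖w‖₊ : ENNReal) < (spectralRadius ℂ T')⁻¹},
        LinearMap.ker ((ContinuousLinearMap.adjoint T -
          (starRingEnd ℂ w) • (1 : H →L[ℂ] H) : H →L[ℂ] H) : H →ₗ[ℂ] H)) :=
      Submodule.mem_iSup_of_mem (starRingEnd ℂ z) (Submodule.mem_iSup_of_mem hwmem hker)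
    have := hy u hu_in
    have := congrArg (starRingEnd ℂ) this
    simpa [inner_conj_symm] using this
  -- step 3: coefficients vanish
  have hcoef : ∀ (x : H), x ∈ kerAdj T → ∀ n : ℕ,
      inner (𝕜 := ℂ) ((T' ^ n) x) y = 0 := by
    intro x hx
    set L : (H →L[ℂ] H) →L[ℂ] ℂ :=
      (innerSL ℂ y).comp (ContinuousLinearMap.apply ℂ H x) with hL
    have hball := (spectrum.hasFPowerSeriesOnBall_inverse_one_sub_smul ℂ T')
    have hcomp := L.comp_hasFPowerSeriesOnBall hball
    have hzero : (L ∘ fun z : ℂ => Ring.inverse (1 - z • T')) =ᶠ[nhds (0 : ℂ)] 0 := by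
      have hball_nhds : EMetric.ball (0 : ℂ) (‖T'‖₊ : ENNReal)⁻¹ ∈ nhds (0 : ℂ) :=
        EMetric.ball_mem_nhds 0 (ENNReal.inv_pos.mpr ENNReal.coe_ne_top)
      filter_upwards [hball_nhds] with z hz
      have hz' : (‖z‖₊ : ENNReal) < (spectralRadius ℂ T')⁻¹ := by
        have h1 : (‖z‖₊ : ENNReal) < (‖T'‖₊ : ENNReal)⁻¹ := by
          simpa [EMetric.mem_ball, edist_zero_right, enorm_eq_nnnorm] using EMetric.mem_ball.mp hz
        exact h1.trans_le (ENNReal.inv_le_inv.mpr (spectrum.spectralRadius_le_nnnorm T'))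
      have := hmem z hz' x hx
      simpa [hL, ContinuousLinearMap.apply] using this
    have hq0 := (hcomp.hasFPowerSeriesAt.congr hzero).eq_zero
    intro n
    have h1 : (L.compFormalMultilinearSeries
        (fun n => ContinuousMultilinearMap.mkPiRing ℂ (Fin n) (T' ^ n))) n
        (fun _ => (1 : ℂ)) = 0 := by rw [hq0]; simp
    have h2 : inner (𝕜 := ℂ) y ((T' ^ n) x) = 0 := by
      have h1' : L (ContinuousMultilinearMap.mkPiRing ℂ (Fin n) (T' ^ n) (fun _ => (1 : ℂ))) = 0 := h1
      simpa [-FormalMultilinearSeries.apply_eq_prod_smul_coeff,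
        ContinuousLinearMap.compFormalMultilinearSeries_apply,
        ContinuousMultilinearMap.mkPiRing_apply, hL, ContinuousLinearMap.apply] using h1'
    have := congrArg (starRingEnd ℂ) h2
    simpa [inner_conj_symm] using this
  -- step 4: iterate
  set S := ContinuousLinearMap.adjoint T' with hS
  have horth : ∀ n : ℕ, ∀ x ∈ kerAdj T, inner (𝕜 := ℂ) x ((S ^ n) y) = 0 := by
    intro n x hx
    have hSp : S ^ n = ContinuousLinearMap.adjoint (T' ^ n) := by
      rw [hS, ← ContinuousLinearMap.star_eq_adjoint, ← ContinuousLinearMap.star_eq_adjoint,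
        ← star_pow]
    rw [hSp, ContinuousLinearMap.adjoint_inner_right]
    exact hcoef x hx n
  have hiter : ∀ n : ℕ, y = (T ^ n) ((S ^ n) y) := by
    intro n
    induction n with
    | zero => simp
    | succ n ih =>
      have hstep := aux_step T A hA2 ((S ^ n) y) (horth n)
      rw [← hT', ← hS] at hstep
      have e1 : (S ^ (n+1)) y = S ((S ^ n) y) := by
        rw [pow_succ', ContinuousLinearMap.mul_apply]
      have e2 : ∀ v : H, (T ^ (n+1)) v = (T ^ n) (T v) := fun v => by
        rw [pow_succ, ContinuousLinearMap.mul_apply]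
      rw [e2, e1, ← hstep, ← ih]
  have hy_range : y ∈ (⨅ n : ℕ, LinearMap.range ((T ^ n : H →L[ℂ] H) : H →ₗ[ℂ] H)) := by
    rw [Submodule.mem_iInf]
    intro n
    exact ⟨(S ^ n) y, (hiter n).symm⟩
  rw [han] at hy_range
  simpa using hy_range
end
end

section
/- Let T be a bounded analytic operator on a complex Banach space X (i.e. ⋂_{n∈ℕ} T^n(X) = {0}). Then 0 belongs to the local spectrum σ_T(x) for every nonzero x ∈ X; equivalently, if there is an open neighborhood G of 0 and an analytic function f : G → X with (λ − T) f(λ) = x for all λ ∈ G, then x = 0. -/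
open ContinuousLinearMap Submodule Filter

noncomputable section

variable {H : Type*} [NormedAddCommGroup H] [InnerProductSpace ℂ H] [CompleteSpace H]

/-- if `T` is analytic on a complex Banach space `X`, then `0 ∈ σ_T(x)` for
every nonzero `x`: any analytic local resolvent function at `0` forces `x = 0`. -/
theorem stmt_18 {X : Type*} [NormedAddCommGroup X] [NormedSpace ℂ X] [CompleteSpace X]
    (T : X →L[ℂ] X)
    (han : (⨅ n : ℕ, LinearMap.range ((T ^ n : X →L[ℂ] X) : X →ₗ[ℂ] X)) = ⊥)
    (x : X) (G : Set ℂ) (hG : IsOpen G) (h0 : (0 : ℂ) ∈ G)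
    (f : ℂ → X) (hf : AnalyticOnNhd ℂ f G)
    (hfx : ∀ l ∈ G, l • f l - T (f l) = x) :
    x = 0 := by
  have key : ∀ k : ℕ, ∃ (g : ℂ → X) (c : X), AnalyticAt ℂ g 0 ∧
      (∀ᶠ l in nhds (0 : ℂ), l • g l - T (g l) = c) ∧ x = (T ^ k) c := by
    intro k
    induction k with
    | zero =>
      refine ⟨f, x, hf 0 h0, ?_, by simp⟩
      filter_upwards [hG.mem_nhds h0] with l hl using hfx l hl
    | succ k ih =>
      obtain ⟨g, c, hg, heq, hxc⟩ := ih
      obtain ⟨p, hp⟩ := hg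
      have hha : AnalyticAt ℂ (dslope g 0) 0 := ⟨p.fslope, hp.has_fpower_series_dslope_fslope⟩
      have hc : c = -(T (g 0)) := by
        have h1 := heq.self_of_nhds
        simpa using h1.symm
      have hfact : ∀ l : ℂ, l • dslope g 0 l = g l - g 0 := fun l => by
        simpa using sub_smul_dslope g 0 l
      have hev : ∀ᶠ l in nhdsWithin (0 : ℂ) {(0:ℂ)}ᶜ, g l = T (dslope g 0 l) := by
        filter_upwards [eventually_nhdsWithin_of_eventually_nhds heq, self_mem_nhdsWithin]
          with l hl hl0
        have h1 : l • g l = l • T (dslope g 0 l) := by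
          have h2 : l • g l = T (g l) + c := by rw [← hl]; abel
          rw [h2, hc, ← map_smul, hfact l, map_sub]
          abel
        exact smul_right_injective X hl0 h1
      have h00 : g 0 = T (dslope g 0 0) := by
        have hga : AnalyticAt ℂ g 0 := ⟨p, hp⟩
        have l1 : Filter.Tendsto g (nhdsWithin (0 : ℂ) {(0:ℂ)}ᶜ) (nhds (g 0)) :=
          hga.continuousAt.continuousWithinAt
        have l2 : Filter.Tendsto (fun l => T (dslope g 0 l)) (nhdsWithin (0 : ℂ) {(0:ℂ)}ᶜ)
            (nhds (T (dslope g 0 0))) :=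
          (T.continuous.continuousAt.comp hha.continuousAt).continuousWithinAt
        exact tendsto_nhds_unique (l1.congr' hev) l2
      refine ⟨dslope g 0, -(g 0), hha, ?_, ?_⟩
      · rw [← nhdsNE_sup_pure, eventually_sup]
        constructor
        · filter_upwards [hev] with l hl
          rw [hfact l, ← hl]
          abel
        · simp only [eventually_pure, zero_smul, zero_sub, ← h00]
      · rw [hxc, hc, pow_succ]
        simp [map_neg]
  have hx : x ∈ (⨅ n : ℕ, LinearMap.range ((T ^ n : X →L[ℂ] X) : X →ₗ[ℂ] X)) := by
    rw [Submodule.mem_iInf]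
    intro k
    obtain ⟨g, c, _, _, hxc⟩ := key k
    exact ⟨c, hxc.symm⟩
  rwa [han, Submodule.mem_bot] at hx
end
end
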